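/- Let f be a proper convex lower semicontinuous function on ℝ^d. Then ri(dom s_f) = ri(dom f), where s_f is the slope of f; in particular ri(dom s_f) is a convex set. -/

import Mathlib

open Filter Topology MeasureTheory Set Metric RealInnerProductSpace
open scoped ENNReal NNReal Pointwise

noncomputable section

def Proper {d : ℕ} (f : EuclideanSpace ℝ (Fin d) → EReal) : Prop :=
  (∀ x, f x ≠ ⊥) ∧ ∃ x, f x ≠ ⊤

def ConvexFn {d : ℕ} (f : EuclideanSpace ℝ (Fin d) → EReal) : Prop :=
  Convex ℝ {p : EuclideanSpace ℝ (Fin d) × ℝ | f p.1 ≤ (p.2 : EReal)}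

def Subdiff {d : ℕ} (f : EuclideanSpace ℝ (Fin d) → EReal) (x : EuclideanSpace ℝ (Fin d)) :
    Set (EuclideanSpace ℝ (Fin d)) :=
  {v | f x ≠ ⊤ ∧ ∀ y, f x + ((⟪v, y - x⟫ : ℝ) : EReal) ≤ f y}

def slopeFn {d : ℕ} (f : EuclideanSpace ℝ (Fin d) → EReal) (x : EuclideanSpace ℝ (Fin d)) : EReal :=
  sInf ((fun v => (‖v‖ : EReal)) '' Subdiff f x)

def eLiminf {d : ℕ} (φ : ℕ → EuclideanSpace ℝ (Fin d) → EReal)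
    (x : EuclideanSpace ℝ (Fin d)) : EReal :=
  ⨅ (u : ℕ → EuclideanSpace ℝ (Fin d)) (_ : Tendsto u atTop (𝓝 x)),
    Filter.liminf (fun n => φ n (u n)) atTop

def eLimsup {d : ℕ} (φ : ℕ → EuclideanSpace ℝ (Fin d) → EReal)
    (x : EuclideanSpace ℝ (Fin d)) : EReal :=
  ⨅ (u : ℕ → EuclideanSpace ℝ (Fin d)) (_ : Tendsto u atTop (𝓝 x)),
    Filter.limsup (fun n => φ n (u n)) atTop

def EpiConv {d : ℕ} (φ : ℕ → EuclideanSpace ℝ (Fin d) → EReal)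
    (ψ : EuclideanSpace ℝ (Fin d) → EReal) : Prop :=
  ∀ x, eLimsup φ x ≤ ψ x ∧ ψ x ≤ eLiminf φ x

def edom {d : ℕ} (h : EuclideanSpace ℝ (Fin d) → EReal) : Set (EuclideanSpace ℝ (Fin d)) :=
  {x | h x ≠ ⊤}

def rdom {d : ℕ} (h : EuclideanSpace ℝ (Fin d) → EReal) : Set (EuclideanSpace ℝ (Fin d)) :=
  {x | h x ≠ ⊤ ∧ h x ≠ ⊥}

def domSub {d : ℕ} (f : EuclideanSpace ℝ (Fin d) → EReal) : Set (EuclideanSpace ℝ (Fin d)) :=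
  {x | (Subdiff f x).Nonempty}

def erealToENNReal (x : EReal) : ℝ≥0∞ :=
  if x = ⊤ then ⊤ else ENNReal.ofReal x.toReal


variable {d : ℕ}

local notation "E" => EuclideanSpace ℝ (Fin d)

lemma mem_ri_iff {s : Set E} {x : E} :
    x ∈ intrinsicInterior ℝ s ↔ x ∈ s ∧ ∃ δ > (0:ℝ),
      ∀ w ∈ (affineSpan ℝ s).direction, ‖w‖ < δ → x + w ∈ s := by
  constructor
  · intro h
    refine ⟨intrinsicInterior_subset h, ?_⟩
    obtain ⟨y, hy, rfl⟩ := mem_intrinsicInterior.1 h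
    rw [mem_interior_iff_mem_nhds, Metric.mem_nhds_iff] at hy
    obtain ⟨ε, εpos, hball⟩ := hy
    refine ⟨ε, εpos, fun w hw hwn => ?_⟩
    have hz : (w +ᵥ (y:E)) ∈ affineSpan ℝ s :=
      AffineSubspace.vadd_mem_of_mem_direction hw y.2
    have : (⟨w +ᵥ (y:E), hz⟩ : affineSpan ℝ s) ∈ Metric.ball y ε := by
      rw [Metric.mem_ball, Subtype.dist_eq]
      simpa [dist_eq_norm] using hwn
    have := hball this
    simpa [Set.mem_preimage, vadd_eq_add, add_comm] using this
  · rintro ⟨hxs, δ, δpos, hb⟩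
    have hxa : x ∈ affineSpan ℝ s := subset_affineSpan ℝ s hxs
    rw [mem_intrinsicInterior]
    refine ⟨⟨x, hxa⟩, ?_, rfl⟩
    rw [mem_interior_iff_mem_nhds, Metric.mem_nhds_iff]
    refine ⟨δ, δpos, fun z hz => ?_⟩
    rw [Metric.mem_ball, Subtype.dist_eq, dist_eq_norm] at hz
    have hw : (z:E) - x ∈ (affineSpan ℝ s).direction := by
      simpa [vsub_eq_sub] using AffineSubspace.vsub_mem_direction z.2 hxa
    have := hb _ hw hz
    simpa [Set.mem_preimage, add_sub_cancel] using this


lemma f_eq_coe {f : E → EReal} (hprop : Proper f) {x : E} (hx : x ∈ edom f) :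
    f x = (((f x).toReal : ℝ) : EReal) := (EReal.coe_toReal hx (hprop.1 x)).symm

lemma conv_ineq {f : E → EReal} (hprop : Proper f) (hconv : ConvexFn f) {x y : E} (hx : x ∈ edom f)
    (hy : y ∈ edom f) {a b : ℝ} (ha : 0 ≤ a) (hb : 0 ≤ b) (hab : a + b = 1) :
    a • x + b • y ∈ edom f ∧
      (f (a • x + b • y)).toReal ≤ a * (f x).toReal + b * (f y).toReal := by
  have hxm : (x, (f x).toReal) ∈ {p : E × ℝ | f p.1 ≤ (p.2 : EReal)} :=
    (f_eq_coe hprop hx).le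
  have hym : (y, (f y).toReal) ∈ {p : E × ℝ | f p.1 ≤ (p.2 : EReal)} :=
    (f_eq_coe hprop hy).le
  have h := hconv hxm hym ha hb hab
  simp only [Prod.smul_mk, Prod.mk_add_mk, smul_eq_mul, Set.mem_setOf_eq] at h
  have hne : f (a • x + b • y) ≠ ⊤ := ne_top_of_le_ne_top (EReal.coe_ne_top _) h
  refine ⟨hne, ?_⟩
  have := EReal.toReal_le_toReal h (hprop.1 _) (EReal.coe_ne_top _)
  exact this.trans_eq (EReal.toReal_coe _)

lemma edom_convex {f : E → EReal} (hprop : Proper f) (hconv : ConvexFn f) : Convex ℝ (edom f) :=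
  fun _ hx _ hy _ _ ha hb hab => (conv_ineq hprop hconv hx hy ha hb hab).1

set_option maxHeartbeats 1000000 in
lemma subdiff_exists {f : E → EReal} (hprop : Proper f) (hconv : ConvexFn f)
    {x₀ : E} (hx : x₀ ∈ intrinsicInterior ℝ (edom f)) :
    (Subdiff f x₀).Nonempty := by
  obtain ⟨hC, δ, δpos, hball⟩ := mem_ri_iff.1 hx
  set V := (affineSpan ℝ (edom f)).direction with hV
  set g : E → ℝ := fun x => (f x).toReal with hg
  set D : E → ℝ → ℝ := fun u t => (g (x₀ + t • u) - g x₀) / t with hD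
  -- membership of small moves
  have hmemC : ∀ u ∈ V, ∀ t : ℝ, 0 ≤ t → t * ‖u‖ < δ → x₀ + t • u ∈ edom f := by
    intro u hu t ht htδ
    have := hball (t • u) (Submodule.smul_mem _ _ hu)
      (by rw [norm_smul, Real.norm_eq_abs, abs_of_nonneg ht]; exact htδ)
    exact this
  have htnorm : ∀ (u : E) (ε t : ℝ), 0 < t → t < ε → ε * ‖u‖ ≤ δ → t * ‖u‖ < δ := by
    intro u ε t ht htε hεδ
    rcases eq_or_lt_of_le (norm_nonneg u) with h0 | h0
    · rw [← h0, mul_zero]; exact δpos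
    · nlinarith
  -- slope monotonicity
  have hslope : ∀ u ∈ V, ∀ s t : ℝ, 0 < t → t ≤ s → x₀ + s • u ∈ edom f →
      x₀ + t • u ∈ edom f ∧ D u t ≤ D u s := by
    intro u hu s t ht hts hs
    have hspos : 0 < s := lt_of_lt_of_le ht hts
    have hcoef : (1 - t / s) + t / s = 1 := by ring
    have h1 : 0 ≤ 1 - t / s := by
      rw [sub_nonneg]; exact (div_le_one hspos).2 hts
    have h2 : 0 ≤ t / s := by positivity
    have hpt : (1 - t / s) • x₀ + (t / s) • (x₀ + s • u) = x₀ + t • u := by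
      rw [smul_add, smul_smul, div_mul_cancel₀ t hspos.ne', ← add_assoc, ← add_smul, hcoef,
        one_smul]
    obtain ⟨hmem, hle⟩ := conv_ineq hprop hconv hC hs h1 h2 hcoef
    rw [hpt] at hmem hle
    refine ⟨hmem, ?_⟩
    show (g (x₀ + t • u) - g x₀) / t ≤ (g (x₀ + s • u) - g x₀) / s
    rw [div_le_div_iff₀ ht hspos]
    have hle2 : (g (x₀ + t • u)) * s ≤ ((1 - t / s) * g x₀ + t / s * g (x₀ + s • u)) * s :=
      mul_le_mul_of_nonneg_right hle hspos.le
    have e : ((1 - t / s) * g x₀ + t / s * g (x₀ + s • u)) * s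
        = (s - t) * g x₀ + t * g (x₀ + s • u) := by
      field_simp; try ring
    rw [e] at hle2; nlinarith
  -- bounded below
  have hbelow : ∀ u ∈ V, ∀ ε : ℝ, 0 < ε → ε * ‖u‖ ≤ δ → BddBelow (D u '' Ioo 0 ε) := by
    intro u hu ε hε hεδ
    set t' : ℝ := δ / (2 * (‖u‖ + 1)) with ht'def
    have ht' : 0 < t' := by positivity
    have hmem' : x₀ - t' • u ∈ edom f := by
      have h := hmemC (-u) (neg_mem hu) t' ht'.le
        (by rw [norm_neg, ht'def]; rw [div_mul_eq_mul_div, div_lt_iff₀ (by positivity)]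
            nlinarith [norm_nonneg u])
      rw [smul_neg, ← sub_eq_add_neg] at h
      exact h
    refine ⟨(g x₀ - g (x₀ - t' • u)) / t', ?_⟩
    rintro r ⟨t, ⟨ht0, htε⟩, rfl⟩
    set c₁ : ℝ := t' / (t + t') with hc₁
    set c₂ : ℝ := t / (t + t') with hc₂
    have htt' : 0 < t + t' := by positivity
    have hsum : c₁ + c₂ = 1 := by rw [hc₁, hc₂]; field_simp; try ring
    have hc₁0 : 0 ≤ c₁ := by positivity
    have hc₂0 : 0 ≤ c₂ := by positivity
    have hmul : c₁ * t - c₂ * t' = 0 := by rw [hc₁, hc₂]; field_simp; try ring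
    have hpt : c₁ • (x₀ + t • u) + c₂ • (x₀ - t' • u) = x₀ := by
      have e : c₁ • (x₀ + t • u) + c₂ • (x₀ - t' • u)
          = (c₁ + c₂) • x₀ + (c₁ * t - c₂ * t') • u := by module
      rw [e, hsum, hmul, one_smul, zero_smul, add_zero]
    have hmemt : x₀ + t • u ∈ edom f := hmemC u hu t ht0.le (htnorm u ε t ht0 htε hεδ)
    obtain ⟨_, hle⟩ := conv_ineq hprop hconv hmemt hmem' hc₁0 hc₂0 hsum
    rw [hpt] at hle
    show (g x₀ - g (x₀ - t' • u)) / t' ≤ (g (x₀ + t • u) - g x₀) / t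
    rw [div_le_div_iff₀ ht' ht0]
    have hkey : g x₀ * (t + t') ≤ t' * g (x₀ + t • u) + t * g (x₀ - t' • u) := by
      have h2 := mul_le_mul_of_nonneg_right hle htt'.le
      have e2 : (c₁ * g (x₀ + t • u) + c₂ * g (x₀ - t' • u)) * (t + t')
          = t' * g (x₀ + t • u) + t * g (x₀ - t' • u) := by
        rw [hc₁, hc₂]; field_simp; try ring
      rw [e2] at h2; exact h2
    nlinarith
  -- nonempty images
  have hne : ∀ (u : E) (ε : ℝ), 0 < ε → (D u '' Ioo 0 ε).Nonempty := by
    intro u ε hε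
    exact ⟨D u (ε / 2), ⟨ε / 2, ⟨half_pos hε, half_lt_self hε⟩, rfl⟩⟩
  set q : E → ℝ := fun u => sInf (D u '' Ioo 0 (δ / (‖u‖ + 1))) with hq
  have hε₀pos : ∀ u : E, 0 < δ / (‖u‖ + 1) := fun u => by positivity
  have hε₀δ : ∀ u : E, (δ / (‖u‖ + 1)) * ‖u‖ ≤ δ := by
    intro u
    rw [div_mul_eq_mul_div, div_le_iff₀ (by positivity)]
    nlinarith [norm_nonneg u]
  -- inf over one safe interval ≤ any value over another safe interval
  have hQle : ∀ u ∈ V, ∀ ε₁ : ℝ, 0 < ε₁ → ε₁ * ‖u‖ ≤ δ → ∀ ε₂ t : ℝ, 0 < t → t < ε₂ →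
      ε₂ * ‖u‖ ≤ δ → sInf (D u '' Ioo 0 ε₁) ≤ D u t := by
    intro u hu ε₁ hε₁ hε₁δ ε₂ t ht0 htε₂ hε₂δ
    set t₀ : ℝ := min t (ε₁ / 2) with ht₀def
    have ht₀0 : 0 < t₀ := lt_min ht0 (half_pos hε₁)
    have ht₀t : t₀ ≤ t := min_le_left _ _
    have hmemt : x₀ + t • u ∈ edom f := hmemC u hu t ht0.le (htnorm u ε₂ t ht0 htε₂ hε₂δ)
    obtain ⟨_, hmono⟩ := hslope u hu t t₀ ht₀0 ht₀t hmemt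
    refine le_trans (csInf_le (hbelow u hu ε₁ hε₁ hε₁δ) ?_) hmono
    exact ⟨t₀, ⟨ht₀0, lt_of_le_of_lt (min_le_right _ _) (half_lt_self hε₁)⟩, rfl⟩
  have hq_eq : ∀ u ∈ V, ∀ ε : ℝ, 0 < ε → ε * ‖u‖ ≤ δ →
      q u = sInf (D u '' Ioo 0 ε) := by
    intro u hu ε hε hεδ
    apply le_antisymm
    · refine le_csInf (hne u ε hε) ?_
      rintro b ⟨t, ⟨ht0, htε⟩, rfl⟩
      exact hQle u hu _ (hε₀pos u) (hε₀δ u) ε t ht0 htε hεδ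
    · refine le_csInf (hne u _ (hε₀pos u)) ?_
      rintro b ⟨t, ⟨ht0, htε⟩, rfl⟩
      exact hQle u hu ε hε hεδ _ t ht0 htε (hε₀δ u)
  -- q (y - x₀) ≤ g y - g x₀ for y ∈ dom
  have hq_y : ∀ y ∈ edom f, y - x₀ ∈ V → q (y - x₀) ≤ g y - g x₀ := by
    intro y hy hu
    set u : E := y - x₀ with hudef
    set ε₀ : ℝ := δ / (‖u‖ + 1) with hε₀def
    set t₀ : ℝ := min (ε₀ / 2) 1 with ht₀def
    have ht₀0 : 0 < t₀ := lt_min (half_pos (hε₀pos u)) one_pos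
    have hy1 : x₀ + (1 : ℝ) • u ∈ edom f := by rw [one_smul, hudef, add_sub_cancel]; exact hy
    obtain ⟨_, hmono⟩ := hslope u hu 1 t₀ ht₀0 (min_le_right _ _) hy1
    have h1 : q u ≤ D u t₀ := by
      refine csInf_le (hbelow u hu ε₀ (hε₀pos u) (hε₀δ u)) ?_
      exact ⟨t₀, ⟨ht₀0, lt_of_le_of_lt (min_le_left _ _) (half_lt_self (hε₀pos u))⟩, rfl⟩
    have h2 : D u 1 = g y - g x₀ := by
      show (g (x₀ + (1:ℝ) • u) - g x₀) / 1 = g y - g x₀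
      rw [one_smul, hudef, add_sub_cancel, div_one]
    linarith [hmono, h1, h2.le, h2.ge]
  -- positive homogeneity
  have hq_smul : ∀ u ∈ V, ∀ c : ℝ, 0 < c → q (c • u) = c * q u := by
    intro u hu c hc
    set ε₁ : ℝ := (δ / (‖u‖ + 1)) / c with hε₁def
    have hε₁pos : 0 < ε₁ := by positivity
    have hncu : ‖c • u‖ = c * ‖u‖ := by
      rw [norm_smul, Real.norm_eq_abs, abs_of_pos hc]
    have hε₁δ : ε₁ * ‖c • u‖ ≤ δ := by
      rw [hncu, hε₁def]
      have : δ / (‖u‖ + 1) / c * (c * ‖u‖) = (δ / (‖u‖ + 1)) * ‖u‖ := by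
        field_simp; try ring
      rw [this]; exact hε₀δ u
    have h1 : q (c • u) = sInf (D (c • u) '' Ioo 0 ε₁) :=
      hq_eq (c • u) (Submodule.smul_mem _ _ hu) ε₁ hε₁pos hε₁δ
    have himg : D (c • u) '' Ioo 0 ε₁ = (fun r => c * r) '' (D u '' Ioo 0 (δ / (‖u‖ + 1))) := by
      ext r
      constructor
      · rintro ⟨t, ⟨ht0, htε⟩, rfl⟩
        refine ⟨D u (t * c), ⟨t * c, ⟨by positivity, ?_⟩, rfl⟩, ?_⟩
        · rw [hε₁def] at htε
          calc t * c < ε₁ * c := by exact mul_lt_mul_of_pos_right htε hc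
            _ = δ / (‖u‖ + 1) := by rw [hε₁def]; field_simp; try ring
        · show c * ((g (x₀ + (t * c) • u) - g x₀) / (t * c)) = (g (x₀ + t • (c • u)) - g x₀) / t
          rw [smul_smul]
          field_simp
      · rintro ⟨r', ⟨s, ⟨hs0, hsε⟩, rfl⟩, rfl⟩
        refine ⟨s / c, ⟨by positivity, ?_⟩, ?_⟩
        · rw [hε₁def]
          exact div_lt_div_of_pos_right hsε hc
        · show (g (x₀ + (s / c) • (c • u)) - g x₀) / (s / c) = c * ((g (x₀ + s • u) - g x₀) / s)
          rw [smul_smul, div_mul_cancel₀ s hc.ne']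
          field_simp
    rw [h1, himg]
    have himg2 : (fun r => c * r) '' (D u '' Ioo 0 (δ / (‖u‖ + 1)))
        = (c • (D u '' Ioo 0 (δ / (‖u‖ + 1))) : Set ℝ) := by
      ext r; simp [Set.mem_smul_set, smul_eq_mul]
    rw [himg2, Real.sInf_smul_of_nonneg hc.le, smul_eq_mul]
  -- subadditivity
  have hq_add : ∀ u₁ ∈ V, ∀ u₂ ∈ V, q (u₁ + u₂) ≤ q u₁ + q u₂ := by
    intro u₁ hu₁ u₂ hu₂
    set ε : ℝ := (δ / 2) / (‖u₁‖ + ‖u₂‖ + 1) with hεdef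
    have hεpos : 0 < ε := by positivity
    have hε12 : ε * ‖u₁ + u₂‖ ≤ δ := by
      have h1 : ‖u₁ + u₂‖ ≤ ‖u₁‖ + ‖u₂‖ := norm_add_le _ _
      have h2 : ε * (‖u₁‖ + ‖u₂‖ + 1) = δ / 2 := by rw [hεdef]; field_simp; try ring
      nlinarith [norm_nonneg u₁, norm_nonneg u₂, mul_le_mul_of_nonneg_left h1 hεpos.le]
    have hε1 : (2 * ε) * ‖u₁‖ ≤ δ := by
      have h2 : ε * (‖u₁‖ + ‖u₂‖ + 1) = δ / 2 := by rw [hεdef]; field_simp; try ring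
      nlinarith [norm_nonneg u₁, norm_nonneg u₂]
    have hε2 : (2 * ε) * ‖u₂‖ ≤ δ := by
      have h2 : ε * (‖u₁‖ + ‖u₂‖ + 1) = δ / 2 := by rw [hεdef]; field_simp; try ring
      nlinarith [norm_nonneg u₁, norm_nonneg u₂]
    rw [hq_eq (u₁ + u₂) (Submodule.add_mem _ hu₁ hu₂) ε hεpos hε12,
      hq_eq u₁ hu₁ (2 * ε) (by positivity) hε1, hq_eq u₂ hu₂ (2 * ε) (by positivity) hε2]
    have key : ∀ s₁ ∈ Ioo (0:ℝ) (2 * ε), ∀ s₂ ∈ Ioo (0:ℝ) (2 * ε),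
        sInf (D (u₁ + u₂) '' Ioo 0 ε) ≤ D u₁ s₁ + D u₂ s₂ := by
      rintro s₁ ⟨hs₁0, hs₁ε⟩ s₂ ⟨hs₂0, hs₂ε⟩
      set t : ℝ := min s₁ s₂ / 2 with htdef
      have ht0 : 0 < t := by
        have := lt_min hs₁0 hs₂0; positivity
      have htε : t < ε := by
        have h1 : min s₁ s₂ ≤ s₁ := min_le_left _ _
        rw [htdef]; nlinarith
      have h2t1 : 2 * t ≤ s₁ := by
        rw [htdef]; have := min_le_left s₁ s₂; linarith
      have h2t2 : 2 * t ≤ s₂ := by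
        rw [htdef]; have := min_le_right s₁ s₂; linarith
      -- memberships
      have hms₁ : x₀ + s₁ • u₁ ∈ edom f :=
        hmemC u₁ hu₁ s₁ hs₁0.le (htnorm u₁ (2 * ε) s₁ hs₁0 hs₁ε hε1)
      have hms₂ : x₀ + s₂ • u₂ ∈ edom f :=
        hmemC u₂ hu₂ s₂ hs₂0.le (htnorm u₂ (2 * ε) s₂ hs₂0 hs₂ε hε2)
      obtain ⟨hm1, hmono1⟩ := hslope u₁ hu₁ s₁ (2 * t) (by linarith) h2t1 hms₁
      obtain ⟨hm2, hmono2⟩ := hslope u₂ hu₂ s₂ (2 * t) (by linarith) h2t2 hms₂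
      -- midpoint convexity
      have hpt : (1/2 : ℝ) • (x₀ + (2 * t) • u₁) + (1/2 : ℝ) • (x₀ + (2 * t) • u₂)
          = x₀ + t • (u₁ + u₂) := by module
      obtain ⟨_, hle⟩ := conv_ineq (a := 1/2) (b := 1/2) hprop hconv hm1 hm2 (by norm_num) (by norm_num) (by norm_num)
      rw [hpt] at hle
      have hDmid : D (u₁ + u₂) t ≤ D u₁ (2 * t) + D u₂ (2 * t) := by
        show (g (x₀ + t • (u₁ + u₂)) - g x₀) / t
            ≤ (g (x₀ + (2*t) • u₁) - g x₀) / (2*t) + (g (x₀ + (2*t) • u₂) - g x₀) / (2*t)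
        rw [← add_div, div_le_div_iff₀ ht0 (by linarith)]
        nlinarith
      have hinf : sInf (D (u₁ + u₂) '' Ioo 0 ε) ≤ D (u₁ + u₂) t :=
        csInf_le (hbelow (u₁ + u₂) (Submodule.add_mem _ hu₁ hu₂) ε hεpos hε12)
          ⟨t, ⟨ht0, htε⟩, rfl⟩
      linarith [hmono1, hmono2]
    have h1 : sInf (D (u₁ + u₂) '' Ioo 0 ε) - sInf (D u₂ '' Ioo 0 (2 * ε))
        ≤ sInf (D u₁ '' Ioo 0 (2 * ε)) := by
      refine le_csInf (hne u₁ _ (by positivity)) ?_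
      rintro b₁ ⟨s₁, hs₁, rfl⟩
      have h2 : sInf (D (u₁ + u₂) '' Ioo 0 ε) - D u₁ s₁ ≤ sInf (D u₂ '' Ioo 0 (2 * ε)) := by
        refine le_csInf (hne u₂ _ (by positivity)) ?_
        rintro b₂ ⟨s₂, hs₂, rfl⟩
        linarith [key s₁ hs₁ s₂ hs₂]
      linarith
    linarith
  -- q at 0
  have hq0 : q 0 = 0 := by
    have hD0 : ∀ t ∈ Ioo (0:ℝ) (δ / (‖(0:E)‖ + 1)), D 0 t = 0 := by
      intro t ht
      show (g (x₀ + t • (0:E)) - g x₀) / t = 0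
      rw [smul_zero, add_zero, sub_self, zero_div]
    have himg : D 0 '' Ioo 0 (δ / (‖(0:E)‖ + 1)) = {0} := by
      rw [Set.image_congr hD0]
      exact Set.Nonempty.image_const (Set.nonempty_Ioo.2 (hε₀pos 0)) 0
    show sInf (D 0 '' Ioo 0 (δ / (‖(0:E)‖ + 1))) = 0
    rw [himg, csInf_singleton]
  -- projection
  set P : E → E := fun w => ((Submodule.orthogonalProjection V w : V) : E) with hP
  have hPmem : ∀ w, P w ∈ V := fun w => (Submodule.orthogonalProjection V w).2
  have hPid : ∀ u ∈ V, P u = u := fun u hu => Submodule.starProjection_eq_self_iff.2 hu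
  have hPadd : ∀ w₁ w₂, P (w₁ + w₂) = P w₁ + P w₂ := by
    intro w₁ w₂; show ((Submodule.orthogonalProjection V (w₁ + w₂) : V) : E) = _
    rw [map_add]; rfl
  have hPsmul : ∀ (c : ℝ) w, P (c • w) = c • P w := by
    intro c w; show ((Submodule.orthogonalProjection V (c • w) : V) : E) = _
    rw [_root_.map_smul]; rfl
  set N : E → ℝ := fun w => q (P w) with hN
  have hN_hom : ∀ c : ℝ, 0 < c → ∀ w, N (c • w) = c * N w := by
    intro c hc w
    show q (P (c • w)) = c * q (P w)
    rw [hPsmul, hq_smul (P w) (hPmem w) c hc]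
  have hN_add : ∀ w₁ w₂, N (w₁ + w₂) ≤ N w₁ + N w₂ := by
    intro w₁ w₂
    show q (P (w₁ + w₂)) ≤ q (P w₁) + q (P w₂)
    rw [hPadd]
    exact hq_add (P w₁) (hPmem w₁) (P w₂) (hPmem w₂)
  -- Hahn-Banach
  set f₀ : E →ₗ.[ℝ] ℝ := ⟨⊥, 0⟩ with hf₀
  have hf₀le : ∀ x : f₀.domain, f₀ x ≤ N x := by
    rintro ⟨x, hx⟩
    have hx0 : x = 0 := (Submodule.mem_bot ℝ).1 hx
    have hN0 : N x = 0 := by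
      rw [hx0]
      show q (P 0) = 0
      have : P 0 = 0 := by
        show ((Submodule.orthogonalProjection V (0 : E) : V) : E) = 0
        rw [map_zero]; rfl
      rw [this, hq0]
    rw [hN0]
    show (0 : f₀.domain →ₗ[ℝ] ℝ) ⟨x, hx⟩ ≤ 0
    simp
  obtain ⟨φ, _, hφ⟩ := exists_extension_of_le_sublinear f₀ N hN_hom hN_add hf₀le
  set v : E := (InnerProductSpace.toDual ℝ E).symm (LinearMap.toContinuousLinearMap φ) with hv
  have hvw : ∀ w, ⟪v, w⟫ = φ w := by
    intro w
    rw [hv, InnerProductSpace.toDual_symm_apply]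
    rfl
  refine ⟨v, hC, fun y => ?_⟩
  by_cases hy : f y = ⊤
  · rw [hy]; exact le_top
  · have hyC : y ∈ edom f := hy
    have hyV : y - x₀ ∈ V := by
      have := AffineSubspace.vsub_mem_direction (subset_affineSpan ℝ _ hyC)
        (subset_affineSpan ℝ _ hC)
      simpa [vsub_eq_sub] using this
    have h1 : φ (y - x₀) ≤ g y - g x₀ := by
      refine le_trans (hφ (y - x₀)) ?_
      show q (P (y - x₀)) ≤ g y - g x₀
      rw [hPid _ hyV]
      exact hq_y y hyC hyV
    have h2 : g x₀ + ⟪v, y - x₀⟫ ≤ g y := by rw [hvw]; linarith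
    calc f x₀ + ((⟪v, y - x₀⟫ : ℝ) : EReal) = ((g x₀ + ⟪v, y - x₀⟫ : ℝ) : EReal) := by
          rw [f_eq_coe hprop hC, ← EReal.coe_add]
      _ ≤ ((g y : ℝ) : EReal) := EReal.coe_le_coe_iff.2 h2
      _ = f y := (f_eq_coe hprop hyC).symm
lemma ri_ball {s : Set E} {x : E} (hx : x ∈ intrinsicInterior ℝ s) :
    ∃ δ > (0:ℝ), ∀ w ∈ (affineSpan ℝ s).direction, ‖w‖ < δ →
      x + w ∈ intrinsicInterior ℝ s := by
  obtain ⟨hxs, δ, δpos, hb⟩ := mem_ri_iff.1 hx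
  refine ⟨δ, δpos, fun w hw hwn => mem_ri_iff.2 ⟨hb w hw hwn, δ - ‖w‖, by linarith, ?_⟩⟩
  intro w' hw' hw'n
  rw [add_assoc]
  exact hb _ (add_mem hw hw') (lt_of_le_of_lt (norm_add_le _ _) (by linarith))

lemma ri_convex {s : Set E} (hs : Convex ℝ s) : Convex ℝ (intrinsicInterior ℝ s) := by
  intro x hx y hy a b ha hb hab
  obtain ⟨hxs, δx, hδx, hbx⟩ := mem_ri_iff.1 hx
  obtain ⟨hys, δy, hδy, hby⟩ := mem_ri_iff.1 hy
  refine mem_ri_iff.2 ⟨hs hxs hys ha hb hab, min δx δy, lt_min hδx hδy, ?_⟩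
  intro w hw hwn
  have e : a • (x + w) + b • (y + w) = a • x + b • y + (a + b) • w := by module
  have e2 : a • x + b • y + w = a • (x + w) + b • (y + w) := by
    rw [e, hab, one_smul]
  rw [e2]
  exact hs (hbx w hw (lt_of_lt_of_le hwn (min_le_left _ _)))
    (hby w hw (lt_of_lt_of_le hwn (min_le_right _ _))) ha hb hab


theorem ri_dom_slope_eq_ri_dom {d : ℕ} (f : EuclideanSpace ℝ (Fin d) → EReal)
    (hprop : Proper f) (hconv : ConvexFn f) (hlsc : LowerSemicontinuous f) :
    intrinsicInterior ℝ (domSub f) = intrinsicInterior ℝ (edom f) ∧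
      Convex ℝ (intrinsicInterior ℝ (domSub f)) := by
  have hSC : domSub f ⊆ edom f := by rintro x ⟨v, hv1, hv2⟩; exact hv1
  have hriCS : intrinsicInterior ℝ (edom f) ⊆ domSub f := fun x hx =>
    subdiff_exists hprop hconv hx
  have hCconv : Convex ℝ (edom f) := edom_convex hprop hconv
  have hCne : (edom f).Nonempty := hprop.2
  have hriCne : (intrinsicInterior ℝ (edom f)).Nonempty := hCne.intrinsicInterior hCconv
  have hspan : affineSpan ℝ (domSub f) = affineSpan ℝ (edom f) := by
    apply le_antisymm (affineSpan_mono ℝ hSC)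
    rw [affineSpan_le]
    intro y hy
    obtain ⟨x₀, hx₀⟩ := hriCne
    obtain ⟨δ, δpos, hball⟩ := ri_ball hx₀
    have hx₀C : x₀ ∈ edom f := intrinsicInterior_subset hx₀
    have hx₀S : x₀ ∈ domSub f := hriCS hx₀
    set w : EuclideanSpace ℝ (Fin d) := y - x₀ with hwdef
    have hwV : w ∈ (affineSpan ℝ (edom f)).direction := by
      have := AffineSubspace.vsub_mem_direction (subset_affineSpan ℝ _ hy)
        (subset_affineSpan ℝ _ hx₀C)
      simpa [vsub_eq_sub] using this
    set c : ℝ := δ / (2 * (‖w‖ + 1)) with hcdef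
    have hc : 0 < c := by positivity
    have hz : x₀ + c • w ∈ intrinsicInterior ℝ (edom f) := by
      refine hball (c • w) (Submodule.smul_mem _ _ hwV) ?_
      rw [norm_smul, Real.norm_eq_abs, abs_of_pos hc, hcdef]
      rw [div_mul_eq_mul_div, div_lt_iff₀ (by positivity)]
      nlinarith [norm_nonneg w]
    have hzS : x₀ + c • w ∈ domSub f := hriCS hz
    have hmem := AffineSubspace.smul_vsub_vadd_mem (affineSpan ℝ (domSub f)) (1 / c)
      (subset_affineSpan ℝ _ hzS) (subset_affineSpan ℝ _ hx₀S) (subset_affineSpan ℝ _ hx₀S)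
    have e : (1 / c) • ((x₀ + c • w) -ᵥ x₀) +ᵥ x₀ = y := by
      rw [vsub_eq_sub, add_sub_cancel_left, smul_smul, one_div, inv_mul_cancel₀ hc.ne',
        one_smul, vadd_eq_add, hwdef, add_comm, add_sub_cancel]
    rwa [e] at hmem
  have hdir : (affineSpan ℝ (domSub f)).direction = (affineSpan ℝ (edom f)).direction := by
    rw [hspan]
  have hmain : intrinsicInterior ℝ (domSub f) = intrinsicInterior ℝ (edom f) := by
    ext x
    constructor
    · intro hx
      obtain ⟨hxS, δ, δpos, hb⟩ := mem_ri_iff.1 hx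
      refine mem_ri_iff.2 ⟨hSC hxS, δ, δpos, fun w hw hwn => ?_⟩
      exact hSC (hb w (by rwa [hdir]) hwn)
    · intro hx
      obtain ⟨δ, δpos, hball⟩ := ri_ball hx
      refine mem_ri_iff.2 ⟨hriCS hx, δ, δpos, fun w hw hwn => ?_⟩
      exact hriCS (hball w (by rwa [← hdir]) hwn)
  exact ⟨hmain, hmain ▸ ri_convex hCconv⟩
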